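/- Let 𝒜 be a finite-dimensional LSA with a Hessian-type inner product H (viewed as a matrix with respect to a fixed basis). Define φ : 𝒜 → aff(n+1) by φ(a) = the pair of the (n+1)×(n+1) matrix with blocks [[λ_a, 0],[aᵀH, 0]] and the translation vector (a, 0), where λ_a denotes left multiplication by a. Then φ is a Lie algebra homomorphism from the underlying Lie algebra of 𝒜 (with bracket [a,b] = ab − ba) into the affine Lie algebra aff(n+1). -/
import Mathlib


open Matrix

theorem stmt_2 (n : ℕ)
    (mul : (Fin n → ℝ) →ₗ[ℝ] (Fin n → ℝ) →ₗ[ℝ] (Fin n → ℝ))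
    (hls : ∀ a b c, mul (mul a b) c - mul a (mul b c) = mul (mul b a) c - mul b (mul a c))
    (H : Matrix (Fin n) (Fin n) ℝ) (hH : H.IsSymm)
    (hhess : ∀ a b c : Fin n → ℝ,
      a ⬝ᵥ H.mulVec (mul b c) - (mul a b) ⬝ᵥ H.mulVec c
        = b ⬝ᵥ H.mulVec (mul a c) - (mul b a) ⬝ᵥ H.mulVec c)
    (φM : (Fin n → ℝ) → Matrix (Fin n ⊕ Unit) (Fin n ⊕ Unit) ℝ)
    (hφM : ∀ a, φM a = Matrix.fromBlocks (LinearMap.toMatrix' (mul a)) 0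
        (Matrix.of fun _ j => Matrix.vecMul a H j) 0)
    (φv : (Fin n → ℝ) → (Fin n ⊕ Unit) → ℝ)
    (hφv : ∀ a, φv a = Sum.elim a fun _ => 0) :
    ∀ a b : Fin n → ℝ,
      φM (mul a b - mul b a) = φM a * φM b - φM b * φM a ∧
      φv (mul a b - mul b a) = (φM a).mulVec (φv b) - (φM b).mulVec (φv a) := by
  intro a b
  have htm : ∀ (f : (Fin n → ℝ) →ₗ[ℝ] (Fin n → ℝ)) (v : Fin n → ℝ),
      (LinearMap.toMatrix' f).mulVec v = f v := by
    intro f v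
    rw [← Matrix.toLin'_apply, Matrix.toLin'_toMatrix']
  have key : mul (mul a b - mul b a) = mul a ∘ₗ mul b - mul b ∘ₗ mul a := by
    apply LinearMap.ext
    intro c
    have h := sub_eq_sub_iff_sub_eq_sub.mp (hls a b c)
    simp only [map_sub, LinearMap.sub_apply, LinearMap.coe_comp, Function.comp_apply]
    exact h
  have hHsymm : ∀ x : Fin n → ℝ, Matrix.vecMul x H = H.mulVec x := by
    intro x
    rw [← Matrix.mulVec_transpose, hH.eq]
  constructor
  · rw [hφM, hφM, hφM, fromBlocks_multiply, fromBlocks_multiply]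
    simp only [Matrix.mul_zero, Matrix.zero_mul, add_zero, zero_add]
    ext i j
    rcases i with i | u <;> rcases j with j | v
    · simp only [fromBlocks_apply₁₁, Matrix.sub_apply]
      rw [key, map_sub, LinearMap.toMatrix'_comp, LinearMap.toMatrix'_comp]
      simp [Matrix.sub_apply]
    · simp [fromBlocks_apply₁₂]
    · simp only [fromBlocks_apply₂₁, Matrix.sub_apply, Matrix.of_apply, Matrix.mul_apply]
      have e : Fin n → ℝ := Pi.single j 1
      have hvm : ∀ x : Fin n → ℝ, Matrix.vecMul x H j = x ⬝ᵥ H.mulVec (Pi.single j 1) := by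
        intro x
        rw [Matrix.mulVec_single]
        simp [Matrix.vecMul, dotProduct]
      have hcol : ∀ (f : (Fin n → ℝ) →ₗ[ℝ] (Fin n → ℝ)) (x : Fin n → ℝ),
          ∑ k, Matrix.vecMul x H k * LinearMap.toMatrix' f k j
            = x ⬝ᵥ H.mulVec (f (Pi.single j 1)) := by
        intro f x
        have hfe : (fun j' => if j' = j then (1:ℝ) else 0) = Pi.single j 1 := by
          funext j'
          simp [Pi.single_apply]
        rw [Matrix.dotProduct_mulVec]
        simp only [dotProduct, LinearMap.toMatrix'_apply, hfe]
      rw [hvm, hcol, hcol]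
      have h := hhess a b (Pi.single j 1)
      have := sub_eq_sub_iff_sub_eq_sub.mp h
      simp only [map_sub, sub_dotProduct]
      linarith [sub_eq_sub_iff_sub_eq_sub.mp (hhess a b (Pi.single j 1))]
    · simp [fromBlocks_apply₂₂]
  · rw [hφv, hφv, hφv, hφM, hφM]
    funext i
    have hm : ∀ x y : Fin n → ℝ,
        (Matrix.fromBlocks (LinearMap.toMatrix' (mul x)) 0
          (Matrix.of fun _ j => Matrix.vecMul x H j) (0 : Matrix Unit Unit ℝ)).mulVec
            (Sum.elim y fun _ => (0:ℝ))
          = Sum.elim (mul x y) (fun _ => Matrix.vecMul x H ⬝ᵥ y) := by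
      intro x y
      funext i0
      rcases i0 with i0 | u0
      · simp [Matrix.fromBlocks_mulVec, htm, Matrix.mulVec_zero]
      · simp [Matrix.fromBlocks_mulVec, Matrix.mulVec, dotProduct]
    rw [hm, hm]
    rcases i with i | u
    · simp [map_sub]
    · simp only [Sum.elim_inr, Pi.sub_apply, map_sub]
      have : Matrix.vecMul a H ⬝ᵥ b = Matrix.vecMul b H ⬝ᵥ a := by
        rw [hHsymm, hHsymm, dotProduct_comm, Matrix.dotProduct_mulVec, hHsymm]
      simp [this]
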